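/- Assume f = max A = b−1 and let s be a complex number with Re s > log N / log b. Then for every real m > 0: γ_B(−m) · e^{−m} E(m) = Σ_{l=0}^∞ γ_B(−m b^{−l}) e^{−m b^{−l}} b^{−ls}. -/

import Mathlib

open Finset

noncomputable section

/-- The rational point a₁/b + ⋯ + a_l/b^l attached to a digit tuple. -/
def digitVal (b l : ℕ) (a : Fin l → ℕ) : ℝ :=
  ∑ i : Fin l, (a i : ℝ) / (b : ℝ) ^ ((i : ℕ) + 1)

/-- The finset of digit tuples of length l with entries in A. -/
def tuples (A : Finset ℕ) (l : ℕ) : Finset (Fin l → ℕ) :=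
  Fintype.piFinset fun _ => A

/-- E(t) = 1 + Σ_{l≥1} Σ_{(a₁,…,a_l)∈A^l} e^{t(a₁/b+⋯+a_l/b^l)} b^{−ls}. -/
def egf (b : ℕ) (A : Finset ℕ) (s : ℂ) (t : ℝ) : ℂ :=
  ∑' l : ℕ, ∑ a ∈ tuples A l, ((Real.exp (t * digitVal b l a) : ℝ) : ℂ) * (b : ℂ) ^ (-(l : ℂ) * s)

/-- α_B(t) = Σ_{d∈B} e^{dt}. -/
def alphaB (B : Finset ℕ) (t : ℝ) : ℝ := ∑ d ∈ B, Real.exp (d * t)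

/-- γ_B(−t) = Π_{i≥0} α_B(−b^i t), as a function of t. -/
def gammaNeg (b : ℕ) (B : Finset ℕ) (t : ℝ) : ℝ := ∏' i : ℕ, alphaB B (-((b : ℝ) ^ i * t))

lemma multipliable_of_summable_log {f : ℕ → ℝ} (hpos : ∀ i, 0 < f i)
    (h : Summable fun i => Real.log (f i)) : Multipliable f := by
  refine ⟨Real.exp (∑' i, Real.log (f i)), ?_⟩
  have H := (Real.continuous_exp.tendsto _).comp h.hasSum
  refine H.congr fun s => ?_
  rw [Function.comp_apply, Real.exp_sum]
  exact Finset.prod_congr rfl fun i _ => Real.exp_log (hpos i)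

lemma alphaB_pos {B : Finset ℕ} (h0 : 0 ∈ B) (t : ℝ) : 0 < alphaB B t :=
  Finset.sum_pos (fun _ _ => Real.exp_pos _) ⟨0, h0⟩

lemma one_le_alphaB {B : Finset ℕ} (h0 : 0 ∈ B) (t : ℝ) : 1 ≤ alphaB B t := by
  have := Finset.single_le_sum (f := fun d : ℕ => Real.exp (d * t))
    (fun d _ => (Real.exp_pos _).le) h0
  simpa [alphaB] using this

lemma alphaB_sub_one_le {B : Finset ℕ} (h0 : 0 ∈ B) {x : ℝ} (hx : 0 ≤ x) :
    alphaB B (-x) - 1 ≤ B.card * Real.exp (-x) := by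
  rw [alphaB, ← Finset.add_sum_erase _ _ h0]
  have h1 : Real.exp ((0:ℕ) * (-x)) = 1 := by simp
  rw [h1, add_sub_cancel_left]
  calc ∑ d ∈ B.erase 0, Real.exp (d * (-x))
      ≤ ∑ _d ∈ B.erase 0, Real.exp (-x) := by
        refine Finset.sum_le_sum fun d hd => ?_
        have hd1 : 1 ≤ (d:ℝ) := by
          have := Finset.mem_erase.mp hd
          exact_mod_cast Nat.one_le_iff_ne_zero.mpr this.1
        refine Real.exp_le_exp.mpr ?_
        nlinarith
    _ = (B.erase 0).card * Real.exp (-x) := by rw [Finset.sum_const, nsmul_eq_mul]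
    _ ≤ B.card * Real.exp (-x) := by
        have : (B.erase 0).card ≤ B.card := Finset.card_erase_le
        have := Real.exp_pos (-x)
        gcongr

lemma multipliable_alphaB {b : ℕ} (hb : 2 ≤ b) {B : Finset ℕ} (h0 : 0 ∈ B)
    {t : ℝ} (ht : 0 < t) :
    Multipliable (fun i : ℕ => alphaB B (-((b:ℝ)^i * t))) := by
  have hpos : ∀ i : ℕ, 0 < alphaB B (-((b:ℝ)^i * t)) := fun i => alphaB_pos h0 _
  refine multipliable_of_summable_log hpos ?_
  have hgeom : Summable (fun i : ℕ => (B.card : ℝ) * Real.exp (-t) ^ (i+1)) := by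
    have : Summable (fun i : ℕ => Real.exp (-t) ^ i) :=
      summable_geometric_of_lt_one (Real.exp_nonneg _)
        (Real.exp_lt_one_iff.mpr (by linarith))
    simpa [pow_succ, mul_comm, mul_assoc, mul_left_comm] using
      (this.mul_left ((B.card : ℝ) * Real.exp (-t)))
  refine Summable.of_nonneg_of_le (fun i => ?_) (fun i => ?_) hgeom
  · exact Real.log_nonneg (one_le_alphaB h0 _)
  · have hx : (0:ℝ) ≤ (b:ℝ)^i * t := by positivity
    have h1 := Real.log_le_sub_one_of_pos (hpos i)
    have h2 := alphaB_sub_one_le h0 hx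
    have h3 : Real.exp (-((b:ℝ)^i * t)) ≤ Real.exp (-t) ^ (i+1) := by
      rw [← Real.exp_nat_mul]
      refine Real.exp_le_exp.mpr ?_
      have hbi : ((i:ℝ)+1) ≤ (b:ℝ)^i := by
        have h2i : i + 1 ≤ 2^i := Nat.lt_two_pow_self (n := i)
        have hbb : (2:ℕ)^i ≤ b^i := Nat.pow_le_pow_left hb i
        have : (i:ℝ) + 1 ≤ ((b:ℕ)^i : ℝ) := by exact_mod_cast le_trans h2i hbb
        simpa using this
      push_cast
      nlinarith
    have hcard : (0:ℝ) ≤ (B.card : ℝ) := by positivity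
    calc Real.log (alphaB B (-((b:ℝ)^i * t))) ≤ alphaB B (-((b:ℝ)^i * t)) - 1 := h1
      _ ≤ B.card * Real.exp (-((b:ℝ)^i * t)) := h2
      _ ≤ B.card * Real.exp (-t) ^ (i+1) := by gcongr

/-- shift lemma: γ(t/b) = α(−t/b) * γ(t). -/
lemma gammaNeg_div {b : ℕ} {B : Finset ℕ} {t : ℝ}
    (hmul : Multipliable (fun i : ℕ => alphaB B (-((b:ℝ)^i * t)))) (hb0 : (b:ℝ) ≠ 0) :
    gammaNeg b B (t / b) = alphaB B (-(t / b)) * gammaNeg b B t := by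
  have hkey : ∀ n : ℕ, (b:ℝ)^(n+1) * (t/b) = (b:ℝ)^n * t := by
    intro n; field_simp; ring
  have hmul' : Multipliable (fun n : ℕ => alphaB B (-((b:ℝ)^(n+1) * (t/b)))) :=
    hmul.congr fun n => by rw [hkey n]
  rw [gammaNeg, tprod_eq_zero_mul' (f := fun n : ℕ => alphaB B (-((b:ℝ)^n * (t/b)))) hmul',
    pow_zero, one_mul, gammaNeg]
  congr 1
  exact tprod_congr fun i => by rw [hkey i]

/-- α_A(t) in terms of α_B(−t), B the reflected digit set. -/
lemma alphaB_reflect {b : ℕ} (hb : 2 ≤ b) {A : Finset ℕ} (hAb : A ⊆ Finset.range b) (t : ℝ) :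
    alphaB A t = Real.exp (((b:ℝ) - 1) * t) * alphaB (A.image fun a => b - 1 - a) (-t) := by
  rw [alphaB, alphaB, Finset.sum_image, Finset.mul_sum]
  · refine Finset.sum_congr rfl fun a ha => ?_
    have hab : a < b := Finset.mem_range.mp (hAb ha)
    have hcast : ((b - 1 - a : ℕ) : ℝ) = (b:ℝ) - 1 - a := by
      have h1 : b - 1 - a + a + 1 = b := by omega
      have := congrArg (fun n : ℕ => (n : ℝ)) h1
      push_cast at this
      linarith
    rw [← Real.exp_add, hcast]
    ring_nf
  · intro a ha a' ha' h
    have hab : a < b := Finset.mem_range.mp (hAb ha)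
    have hab' : a' < b := Finset.mem_range.mp (hAb ha')
    have h : b - 1 - a = b - 1 - a' := h
    omega

/-- the sum over tuples factors as a product. -/
lemma sum_tuples_eq_prod (b : ℕ) (A : Finset ℕ) (m : ℝ) (l : ℕ) :
    ∑ a ∈ tuples A l, Real.exp (m * digitVal b l a)
      = ∏ i ∈ Finset.range l, alphaB A (m / (b:ℝ) ^ (i + 1)) := by
  rw [← Fin.prod_univ_eq_prod_range (fun i => alphaB A (m / (b:ℝ) ^ (i + 1))) l]
  simp only [alphaB]
  rw [Finset.prod_univ_sum]
  rw [tuples]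
  refine Finset.sum_congr rfl fun a _ => ?_
  rw [digitVal, Finset.mul_sum, Real.exp_sum]
  refine Finset.prod_congr rfl fun i _ => ?_
  congr 1
  ring

/-- the key real identity, by induction. -/
lemma key_real {b : ℕ} (hb : 2 ≤ b) {A : Finset ℕ} (hAb : A ⊆ Finset.range b)
    (hbA : b - 1 ∈ A) {m : ℝ} (hm : 0 < m) (l : ℕ) :
    gammaNeg b (A.image fun a => b - 1 - a) m * Real.exp (-m)
        * ∏ i ∈ Finset.range l, alphaB A (m / (b:ℝ) ^ (i + 1))
      = gammaNeg b (A.image fun a => b - 1 - a) (m / (b:ℝ) ^ l)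
        * Real.exp (-(m / (b:ℝ) ^ l)) := by
  have hb0 : (0:ℝ) < (b:ℝ) := by positivity
  have h0B : 0 ∈ (A.image fun a => b - 1 - a) := by
    refine Finset.mem_image.mpr ⟨b - 1, hbA, by omega⟩
  induction l with
  | zero => simp
  | succ l ih =>
    rw [Finset.prod_range_succ, ← mul_assoc, ih]
    have ht : 0 < m / (b:ℝ) ^ l := by positivity
    set t := m / (b:ℝ) ^ l with htdef
    have hstep1 : m / (b:ℝ) ^ (l + 1) = t / b := by
      rw [htdef, pow_succ, div_div]
    rw [hstep1, gammaNeg_div (multipliable_alphaB hb h0B ht) (by positivity),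
      alphaB_reflect hb hAb (t / b)]
    have hexp : Real.exp (-t) * Real.exp (((b:ℝ) - 1) * (t / b)) = Real.exp (-(t / b)) := by
      rw [← Real.exp_add]
      congr 1
      field_simp
      ring
    rw [← hexp]
    ring

/-- Assume max A = b−1, Re s > log N / log b.  For every m > 0,
γ_B(−m) e^{−m} E(m) = Σ_{l≥0} γ_B(−mb^{−l}) e^{−mb^{−l}} b^{−ls}. -/
theorem gammaB_egf_expansion
    (b : ℕ) (hb : 2 ≤ b) (A : Finset ℕ) (hA : A.Nonempty) (hAb : A ⊆ Finset.range b)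
    (hbA : b - 1 ∈ A)
    (s : ℂ) (hs : Real.log A.card / Real.log b < s.re) (m : ℝ) (hm : 0 < m) :
    ((gammaNeg b (A.image fun a => b - 1 - a) m : ℝ) : ℂ) *
        ((Real.exp (-m) : ℝ) : ℂ) * egf b A s m
      = ∑' l : ℕ,
          ((gammaNeg b (A.image fun a => b - 1 - a) (m * (b : ℝ) ^ (-(l : ℤ))) : ℝ) : ℂ) *
            ((Real.exp (-(m * (b : ℝ) ^ (-(l : ℤ)))) : ℝ) : ℂ) * (b : ℂ) ^ (-(l : ℂ) * s) := by
  have hb0 : (0:ℝ) < (b:ℝ) := by positivity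
  rw [egf, ← tsum_mul_left]
  refine tsum_congr fun l => ?_
  have hzp : m * (b:ℝ) ^ (-(l:ℤ)) = m / (b:ℝ) ^ l := by
    rw [zpow_neg, zpow_natCast, div_eq_mul_inv]
  rw [hzp, ← Finset.sum_mul, ← mul_assoc]
  have hcast : (∑ a ∈ tuples A l, ((Real.exp (m * digitVal b l a) : ℝ) : ℂ))
      = ((∑ a ∈ tuples A l, Real.exp (m * digitVal b l a) : ℝ) : ℂ) := by
    push_cast; rfl
  have hkey := key_real hb hAb hbA hm l
  rw [← sum_tuples_eq_prod b A m l] at hkey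
  rw [hcast, ← Complex.ofReal_mul, ← Complex.ofReal_mul, hkey, Complex.ofReal_mul]
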